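/- Let k ≥ 1, y u : Fin k → ℕ with ∀ j, ∑_{l ≤ j} u l ≤ ∑_{l ≤ j} y l. Define v* : Fin k → ℕ recursively from the top: v*(k) = min(u k, y k), and for j < k, v*(j) = min( y j, u j + (∑_{l > j} u l − ∑_{l > j} v* l) ). Then v* satisfies: (i) v* j ≤ y j for all j; (ii) ∑_{l ≤ j} u l ≤ ∑_{l ≤ j} v* l for all j < k; and (iii) ∑_{l=1}^{k} v* l = ∑_{l=1}^{k} u l. -/
import Mathlib

private lemma stmt2_split (k : ℕ) (j : Fin k) (f : Fin k → ℕ) :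
    ∑ l ∈ Finset.Iic j, f l + ∑ l ∈ Finset.Ioi j, f l = ∑ l, f l := by
  rw [← Finset.sum_union (by simp [Finset.disjoint_left])]
  congr 1
  ext l
  simp only [Finset.mem_union, Finset.mem_Iic, Finset.mem_Ioi, Finset.mem_univ, iff_true]
  exact le_or_gt l j

private lemma stmt2_Ioi_insert (k : ℕ) (j s : Fin k) (h : s.val = j.val + 1) :
    Finset.Ioi j = insert s (Finset.Ioi s) := by
  ext l
  simp only [Finset.mem_Ioi, Finset.mem_insert, Fin.lt_iff_val_lt_val, Fin.ext_iff]
  omega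

private lemma stmt2_Iic_insert (k : ℕ) (j s : Fin k) (h : s.val = j.val + 1) :
    Finset.Iic s = insert s (Finset.Iic j) := by
  ext l
  simp only [Finset.mem_Iic, Finset.mem_insert, Fin.le_iff_val_le_val, Fin.ext_iff]
  omega

private lemma stmt2_Ioi_top (k : ℕ) (j : Fin k) (h : j.val + 1 = k) :
    Finset.Ioi j = ∅ := by
  ext l
  simp only [Finset.mem_Ioi, Finset.notMem_empty, iff_false, Fin.lt_iff_val_lt_val, not_lt]
  omega

private lemma stmt2_aux1 (k : ℕ) (u y v : Fin k → ℕ)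
    (hv : ∀ j : Fin k,
      v j = min (y j)
        (u j + ((∑ l ∈ Finset.Ioi j, u l) - (∑ l ∈ Finset.Ioi j, v l)))) :
    ∀ j : Fin k, ∑ l ∈ Finset.Ioi j, v l ≤ ∑ l ∈ Finset.Ioi j, u l := by
  suffices h : ∀ n, ∀ j : Fin k, k - j.val ≤ n →
      ∑ l ∈ Finset.Ioi j, v l ≤ ∑ l ∈ Finset.Ioi j, u l from
    fun j => h k j (by omega)
  intro n
  induction n with
  | zero => intro j hj; have := j.isLt; omega
  | succ n ih =>
    intro j hj
    by_cases hjk : j.val + 1 = k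
    · rw [stmt2_Ioi_top k j hjk]; simp
    · have hs : j.val + 1 < k := by have := j.isLt; omega
      set s : Fin k := ⟨j.val + 1, hs⟩ with hsdef
      have hIoi := stmt2_Ioi_insert k j s rfl
      have hns : s ∉ Finset.Ioi s := by simp
      rw [hIoi, Finset.sum_insert hns, Finset.sum_insert hns]
      have IH := ih s (by simp [hsdef]; omega)
      have h2 := hv s
      omega

private lemma stmt2_aux2 (k : ℕ) (u y v : Fin k → ℕ)
    (hu : ∀ j : Fin k, (∑ l ∈ Finset.Iic j, u l) ≤ (∑ l ∈ Finset.Iic j, y l))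
    (hv : ∀ j : Fin k,
      v j = min (y j)
        (u j + ((∑ l ∈ Finset.Ioi j, u l) - (∑ l ∈ Finset.Ioi j, v l)))) :
    ∀ j : Fin k,
      ((∑ l ∈ Finset.Ioi j, u l) - (∑ l ∈ Finset.Ioi j, v l)) +
        (∑ l ∈ Finset.Iic j, u l) ≤ ∑ l ∈ Finset.Iic j, y l := by
  suffices h : ∀ n, ∀ j : Fin k, k - j.val ≤ n →
      ((∑ l ∈ Finset.Ioi j, u l) - (∑ l ∈ Finset.Ioi j, v l)) +
        (∑ l ∈ Finset.Iic j, u l) ≤ ∑ l ∈ Finset.Iic j, y l from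
    fun j => h k j (by omega)
  intro n
  induction n with
  | zero => intro j hj; have := j.isLt; omega
  | succ n ih =>
    intro n hj
    by_cases hjk : n.val + 1 = k
    · rw [stmt2_Ioi_top k n hjk]
      simpa using hu n
    · have hs : n.val + 1 < k := by have := n.isLt; omega
      set s : Fin k := ⟨n.val + 1, hs⟩ with hsdef
      have hIoi := stmt2_Ioi_insert k n s rfl
      have hIic := stmt2_Iic_insert k n s rfl
      have hns : s ∉ Finset.Ioi s := by simp
      have hns' : s ∉ Finset.Iic n := by
        simp [Fin.le_iff_val_le_val, hsdef]
      have IH := ih s (by simp [hsdef]; omega)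
      rw [hIic, Finset.sum_insert hns', Finset.sum_insert hns'] at IH
      rw [hIoi, Finset.sum_insert hns, Finset.sum_insert hns]
      have h1 := stmt2_aux1 k u y v hv s
      have h2 := hv s
      have h3 := hu n
      omega

/-- The top-down recursively defined allocation vector `v*` with
`v* j = min (y j) (u j + (∑_{l>j} u l − ∑_{l>j} v* l))` (for `j = k` the `Ioi` sum is empty,
so `v* k = min (u k) (y k)`) satisfies: (i) `v* j ≤ y j`; (ii) prefix dominance
`∑_{l≤j} u l ≤ ∑_{l≤j} v* l`; (iii) total conservation `∑ v* = ∑ u`. -/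
theorem stmt2 (k : ℕ) (hk : 1 ≤ k) (u y v : Fin k → ℕ)
    (hu : ∀ j : Fin k, (∑ l ∈ Finset.Iic j, u l) ≤ (∑ l ∈ Finset.Iic j, y l))
    (hv : ∀ j : Fin k,
      v j = min (y j)
        (u j + ((∑ l ∈ Finset.Ioi j, u l) - (∑ l ∈ Finset.Ioi j, v l)))) :
    (∀ j : Fin k, v j ≤ y j) ∧
    (∀ j : Fin k, (∑ l ∈ Finset.Iic j, u l) ≤ (∑ l ∈ Finset.Iic j, v l)) ∧
    (∑ l : Fin k, v l) = (∑ l : Fin k, u l) := by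
  have htot : (∑ l : Fin k, v l) = (∑ l : Fin k, u l) := by
    set j0 : Fin k := ⟨0, hk⟩ with hj0
    have hIic0 : Finset.Iic j0 = {j0} := by
      ext l
      simp only [Finset.mem_Iic, Finset.mem_singleton, Fin.le_iff_val_le_val, Fin.ext_iff, hj0]
      omega
    have hsu := stmt2_split k j0 u
    have hsv := stmt2_split k j0 v
    rw [hIic0, Finset.sum_singleton] at hsu hsv
    have h1 := stmt2_aux1 k u y v hv j0
    have h2 := stmt2_aux2 k u y v hu hv j0
    rw [hIic0, Finset.sum_singleton, Finset.sum_singleton] at h2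
    have h3 := hv j0
    omega
  refine ⟨fun j => by have := hv j; omega, fun j => ?_, htot⟩
  have hsu := stmt2_split k j u
  have hsv := stmt2_split k j v
  have h1 := stmt2_aux1 k u y v hv j
  omega
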